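/- Let X and Y be types, f : X × Y → Bool, and let Y₀ be a finite subset of Y of cardinality d that is shattered by f, i.e., for every R ⊆ Y₀ there exists x ∈ X with (f(x,y) = true ⟺ y ∈ R) for all y ∈ Y₀. Then there exists a finite set S ⊆ X with |S| = 2^d such that: (a) the restrictions y ↦ f(x,y) to Y₀ are pairwise distinct for x ∈ S, and (b) for every D ⊆ Y₀ and every σ : Y → Bool, the set T = {x ∈ S : ∀ y ∈ D, f(x,y) = σ(y)}, whenever |T| ≥ 2, admits a column c ∈ Y₀ \ D with |{x ∈ T : f(x,c) = true}| = |{x ∈ T : f(x,c) = false}| = |T| / 2. -/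

import Mathlib

/-- **A shattered set of size `d` yields `2^d` rows with balancedness `1/2`.**
If `Y₀` (of size `d`) is shattered by `f`, then there are `2^d` rows of the
communication matrix of `f` that are pairwise distinct on `Y₀`, and every
subset of these rows obtained by fixing values on columns `D ⊆ Y₀`, if it has
at least two elements, is split exactly in half by some column in `Y₀ \ D`. -/
theorem shattered_set_gives_balanced_rows {X Y : Type*} [DecidableEq Y]
    (f : X × Y → Bool) (Y₀ : Finset Y) (d : ℕ) (hcard : Y₀.card = d)
    (hshat : ∀ R ⊆ Y₀, ∃ x : X, ∀ y ∈ Y₀, (f (x, y) = true ↔ y ∈ R)) :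
    ∃ S : Finset X, S.card = 2 ^ d ∧
      (∀ x₁ ∈ S, ∀ x₂ ∈ S, (∀ y ∈ Y₀, f (x₁, y) = f (x₂, y)) → x₁ = x₂) ∧
      ∀ D ⊆ Y₀, ∀ σ : Y → Bool,
        2 ≤ (S.filter (fun x => ∀ y ∈ D, f (x, y) = σ y)).card →
        ∃ c ∈ Y₀ \ D,
          ((S.filter (fun x => ∀ y ∈ D, f (x, y) = σ y)).filter
              (fun x => f (x, c) = true)).card =
            (S.filter (fun x => ∀ y ∈ D, f (x, y) = σ y)).card / 2 ∧
          ((S.filter (fun x => ∀ y ∈ D, f (x, y) = σ y)).filter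
              (fun x => f (x, c) = false)).card =
            (S.filter (fun x => ∀ y ∈ D, f (x, y) = σ y)).card / 2 := by
  classical
  choose g hg using hshat
  set g' : Finset Y → X := fun R => g (R ∩ Y₀) Finset.inter_subset_right with hg'def
  have hkey : ∀ R ∈ Y₀.powerset, ∀ y ∈ Y₀, (f (g' R, y) = true ↔ y ∈ R) := by
    intro R hR y hy
    rw [Finset.mem_powerset] at hR
    have h := hg (R ∩ Y₀) Finset.inter_subset_right y hy
    exact h.trans ⟨fun hm => (Finset.mem_inter.mp hm).1,
      fun hm => Finset.mem_inter.mpr ⟨hm, hR hm⟩⟩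
  have hinj : Set.InjOn g' Y₀.powerset := by
    intro R₁ h₁ R₂ h₂ heq
    ext y
    by_cases hy : y ∈ Y₀
    · rw [← hkey R₁ h₁ y hy, ← hkey R₂ h₂ y hy, heq]
    · exact iff_of_false (fun h => hy (Finset.mem_powerset.mp h₁ h))
        (fun h => hy (Finset.mem_powerset.mp h₂ h))
  refine ⟨Y₀.powerset.image g', ?_, ?_, ?_⟩
  · rw [Finset.card_image_of_injOn hinj, Finset.card_powerset, hcard]
  · rintro x₁ hx₁ x₂ hx₂ heq
    simp only [Finset.mem_image] at hx₁ hx₂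
    obtain ⟨R₁, h₁, rfl⟩ := hx₁
    obtain ⟨R₂, h₂, rfl⟩ := hx₂
    congr 1
    ext y
    by_cases hy : y ∈ Y₀
    · rw [← hkey R₁ h₁ y hy, ← hkey R₂ h₂ y hy, heq y hy]
    · exact iff_of_false (fun h => hy (Finset.mem_powerset.mp h₁ h))
        (fun h => hy (Finset.mem_powerset.mp h₂ h))
  · intro D hD σ hT
    set Q' : Finset Y → Prop := fun R => ∀ y ∈ D, (y ∈ R ↔ σ y = true) with hQ'
    have hfilter : (Y₀.powerset.image g').filter (fun x => ∀ y ∈ D, f (x, y) = σ y)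
        = (Y₀.powerset.filter Q').image g' := by
      rw [Finset.filter_image]
      congr 1
      apply Finset.filter_congr
      intro R hR
      constructor
      · intro h y hy
        rw [← hkey R hR y (hD hy), h y hy]
      · intro h y hy
        have h1 := hkey R hR y (hD hy)
        have h2 := h y hy
        cases hσ : σ y <;> cases hf : f (g' R, y) <;> simp_all
    set P' := Y₀.powerset.filter Q' with hP'
    have hP'sub : P' ⊆ Y₀.powerset := Finset.filter_subset _ _
    have hcardT : ((Y₀.powerset.image g').filter
        (fun x => ∀ y ∈ D, f (x, y) = σ y)).card = P'.card := by
      rw [hfilter, Finset.card_image_of_injOn (hinj.mono (by exact_mod_cast hP'sub))]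
    rw [hcardT] at hT
    obtain ⟨R₁, hR₁, R₂, hR₂, hne⟩ := Finset.one_lt_card.mp hT
    obtain ⟨c, hc⟩ : ∃ c, ¬(c ∈ R₁ ↔ c ∈ R₂) := by
      by_contra h
      push_neg at h
      exact hne (Finset.ext h)
    have hR₁pow := Finset.mem_powerset.mp (hP'sub hR₁)
    have hR₂pow := Finset.mem_powerset.mp (hP'sub hR₂)
    have hQ₁ : Q' R₁ := (Finset.mem_filter.mp hR₁).2
    have hQ₂ : Q' R₂ := (Finset.mem_filter.mp hR₂).2
    have hcY₀ : c ∈ Y₀ := by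
      by_cases h1 : c ∈ R₁
      · exact hR₁pow h1
      · by_cases h2 : c ∈ R₂
        · exact hR₂pow h2
        · exact absurd (iff_of_false h1 h2) hc
    have hcD : c ∉ D := by
      intro hcd
      exact hc ((hQ₁ c hcd).trans (hQ₂ c hcd).symm)
    set A := P'.filter (fun R => c ∈ R) with hA
    set B := P'.filter (fun R => c ∉ R) with hB
    have hmemP' : ∀ R ∈ P', ∀ R' ⊆ Y₀, (∀ y ∈ D, (y ∈ R' ↔ y ∈ R)) → R' ∈ P' := by
      intro R hR R' hsub hiff
      rw [hP', Finset.mem_filter, Finset.mem_powerset]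
      refine ⟨hsub, fun y hy => (hiff y hy).trans ((Finset.mem_filter.mp hR).2 y hy)⟩
    have hAB : A.card = B.card := by
      apply Finset.card_nbij' (fun R => R.erase c) (fun R => insert c R)
      · intro R hR
        simp only [Finset.mem_coe] at hR ⊢
        rw [Finset.mem_filter]
        obtain ⟨hRP', hcR⟩ := Finset.mem_filter.mp hR
        refine ⟨hmemP' R hRP' _ ((Finset.erase_subset _ _).trans
          (Finset.mem_powerset.mp (hP'sub hRP'))) ?_, by simp⟩
        intro y hy
        have : y ≠ c := fun h => hcD (h ▸ hy)
        simp [Finset.mem_erase, this]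
      · intro R hR
        simp only [Finset.mem_coe] at hR ⊢
        rw [Finset.mem_filter]
        obtain ⟨hRP', hcR⟩ := Finset.mem_filter.mp hR
        refine ⟨hmemP' R hRP' _ (Finset.insert_subset hcY₀
          (Finset.mem_powerset.mp (hP'sub hRP'))) ?_, by simp⟩
        intro y hy
        have : y ≠ c := fun h => hcD (h ▸ hy)
        simp [Finset.mem_insert, this]
      · intro R hR
        exact Finset.insert_erase (Finset.mem_filter.mp hR).2
      · intro R hR
        exact Finset.erase_insert (Finset.mem_filter.mp hR).2
    have hsplit : A.card + B.card = P'.card :=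
      Finset.card_filter_add_card_filter_not (p := fun R => c ∈ R)
    refine ⟨c, Finset.mem_sdiff.mpr ⟨hcY₀, hcD⟩, ?_, ?_⟩
    · have heq : ((Y₀.powerset.image g').filter (fun x => ∀ y ∈ D, f (x, y) = σ y)).filter
          (fun x => f (x, c) = true) = A.image g' := by
        rw [hfilter, Finset.filter_image]
        congr 1
        rw [hA]
        apply Finset.filter_congr
        intro R hR
        exact hkey R (hP'sub hR) c hcY₀
      rw [heq, hcardT,
        Finset.card_image_of_injOn (hinj.mono (by
          exact_mod_cast (Finset.filter_subset _ _).trans hP'sub))]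
      omega
    · have heq : ((Y₀.powerset.image g').filter (fun x => ∀ y ∈ D, f (x, y) = σ y)).filter
          (fun x => f (x, c) = false) = B.image g' := by
        rw [hfilter, Finset.filter_image]
        congr 1
        rw [hB]
        apply Finset.filter_congr
        intro R hR
        have h1 := hkey R (hP'sub hR) c hcY₀
        rw [← h1]; cases f (g' R, c) <;> simp
      rw [heq, hcardT,
        Finset.card_image_of_injOn (hinj.mono (by
          exact_mod_cast (Finset.filter_subset _ _).trans hP'sub))]
      omega
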